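/- If x : (−∞, 0] → ℝ is differentiable, nonnegative, and satisfies x'(t) + λ x(t) ≤ (1/λ)‖f‖² for all t ≤ 0, where λ > 0, then x(t) ≥ e^{−λt} x(0) + (1/λ²)‖f‖² (1 − e^{−λt}) for all t ≤ 0. -/

import Mathlib

open Set

/-- Backward-in-time Gronwall inequality: if `x` is differentiable on `(-∞,0]`,
nonnegative, and satisfies `x'(t) + λ x(t) ≤ (1/λ)‖f‖²` for all `t ≤ 0`, where
`λ > 0` and `‖f‖` is a fixed nonnegative constant, then
`x(t) ≥ e^{-λt} x(0) + (1/λ²)‖f‖² (1 - e^{-λt})` for all `t ≤ 0`. -/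
theorem backward_gronwall_lower_bound
    (lam F : ℝ) (hlam : 0 < lam) (hF : 0 ≤ F)
    (x x' : ℝ → ℝ)
    (hderiv : ∀ t ≤ (0:ℝ), HasDerivAt x (x' t) t)
    (hnonneg : ∀ t ≤ (0:ℝ), 0 ≤ x t)
    (hineq : ∀ t ≤ (0:ℝ), x' t + lam * x t ≤ (1 / lam) * F ^ 2) :
    ∀ t ≤ (0:ℝ),
      x t ≥ Real.exp (-lam * t) * x 0 +
        (1 / lam ^ 2) * F ^ 2 * (1 - Real.exp (-lam * t)) := by
  intro t ht
  set c : ℝ := (1 / lam ^ 2) * F ^ 2 with hc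
  set g : ℝ → ℝ := fun s => Real.exp (lam * s) * (x s - c) with hgdef
  have hg : ∀ s ≤ (0:ℝ), HasDerivAt g
      (Real.exp (lam * s) * (x' s + lam * x s - (1 / lam) * F ^ 2)) s := by
    intro s hs
    have h1 : HasDerivAt (fun u => Real.exp (lam * u)) (lam * Real.exp (lam * s)) s := by
      simpa [mul_comm, Function.comp_def] using (Real.hasDerivAt_exp (lam * s)).comp s
        ((hasDerivAt_id s).const_mul lam)
    have h2 := h1.mul ((hderiv s hs).sub_const c)
    refine h2.congr_deriv ?_
    have hlam' : lam ≠ 0 := ne_of_gt hlam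
    rw [hc]
    field_simp
    ring
  have hmono : AntitoneOn g (Iic (0:ℝ)) := by
    apply antitoneOn_of_deriv_nonpos (convex_Iic 0)
    · exact fun s hs => ((hg s hs).continuousAt).continuousWithinAt
    · intro s hs
      rw [interior_Iic] at hs
      exact (hg s hs.le).differentiableAt.differentiableWithinAt
    · intro s hs
      rw [interior_Iic] at hs
      rw [(hg s hs.le).deriv]
      have hx := hineq s hs.le
      have hle : x' s + lam * x s - (1 / lam) * F ^ 2 ≤ 0 := by linarith
      exact mul_nonpos_of_nonneg_of_nonpos (Real.exp_pos _).le hle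
  have key : g 0 ≤ g t := hmono (mem_Iic.2 ht) (mem_Iic.2 le_rfl) ht
  have hg0 : g 0 = x 0 - c := by simp [hgdef]
  have hgt : g t = Real.exp (lam * t) * (x t - c) := rfl
  rw [hg0, hgt] at key
  have hE : Real.exp (-lam * t) * Real.exp (lam * t) = 1 := by
    rw [← Real.exp_add]; ring_nf; exact Real.exp_zero
  have hEpos := Real.exp_pos (-lam * t)
  have h2 : Real.exp (-lam * t) * (x 0 - c) ≤ x t - c := by
    have := mul_le_mul_of_nonneg_left key hEpos.le
    calc Real.exp (-lam * t) * (x 0 - c) ≤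
        Real.exp (-lam * t) * (Real.exp (lam * t) * (x t - c)) := this
      _ = (Real.exp (-lam * t) * Real.exp (lam * t)) * (x t - c) := by ring
      _ = x t - c := by rw [hE]; ring
  nlinarith [h2]
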